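/- Let G be a group acting by homeomorphisms on a nonempty compact Hausdorff connected topological space X which is regular, i.e. every point of X has a neighborhood basis consisting of open sets with finite frontier. Then for every finite open cover 𝒜 of X and every sequence (s_n)_{n≥1} of elements of G, if N_n denotes the minimal cardinality of a subfamily of the cover {s_1·A_1 ∩ … ∩ s_n·A_n : A_1,…,A_n ∈ 𝒜} of X that still covers X, then (log N_n)/n tends to 0 as n → ∞. (Hence every action of a group on a regular continuum has zero topological sequence entropy, i.e. is null.) -/

import Mathlib

open Pointwise Filter Topology

/-- Every action of a group on a regular (rim-finite) continuum has zero
topological sequence entropy: for every finite open cover `𝒜` and every sequence `s` in `G`,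
if `N n` is the minimal cardinality of a subcover of `⋁_{i=1}^n s_i 𝒜`, then
`(log N n)/n → 0`. -/
theorem stmt_0 {G X : Type*} [Group G] [TopologicalSpace X] [CompactSpace X] [T2Space X]
    [ConnectedSpace X] [Nonempty X] [MulAction G X] [ContinuousConstSMul G X]
    (hreg : ∀ x : X, ∀ W ∈ nhds x, ∃ V : Set X, IsOpen V ∧ x ∈ V ∧ V ⊆ W ∧ (frontier V).Finite)
    (𝒜 : Set (Set X)) (h𝒜fin : 𝒜.Finite) (h𝒜open : ∀ A ∈ 𝒜, IsOpen A)
    (h𝒜cov : ⋃₀ 𝒜 = Set.univ)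
    (s : ℕ → G) (N : ℕ → ℕ)
    (hN : ∀ n : ℕ, 1 ≤ n → IsLeast {k : ℕ | ∃ 𝓑 : Set (Set X),
        (∀ B ∈ 𝓑, ∃ f : Fin n → Set X, (∀ i, f i ∈ 𝒜) ∧ B = ⋂ i, s (i.1 + 1) • f i) ∧
        ⋃₀ 𝓑 = Set.univ ∧ 𝓑.Finite ∧ 𝓑.ncard = k} (N n)) :
    Tendsto (fun n : ℕ => Real.log (N n) / n) atTop (𝓝 0) := by
  classical
  obtain ⟨x₀⟩ := ‹Nonempty X›
  -- refine the cover by finite-frontier open sets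
  have hch : ∀ x : X, ∃ V : Set X, IsOpen V ∧ x ∈ V ∧ (frontier V).Finite ∧ ∃ A ∈ 𝒜, V ⊆ A := by
    intro x
    have hx : x ∈ ⋃₀ 𝒜 := by rw [h𝒜cov]; trivial
    obtain ⟨A, hA, hxA⟩ := hx
    obtain ⟨V, hVo, hxV, hVA, hVf⟩ := hreg x A ((h𝒜open A hA).mem_nhds hxA)
    exact ⟨V, hVo, hxV, hVf, A, hA, hVA⟩
  choose V hVo hxV hVfr A hA𝒜 hVA using hch
  obtain ⟨t, ht⟩ : ∃ t : Finset X, (Set.univ : Set X) ⊆ ⋃ x ∈ t, V x :=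
    IsCompact.elim_finite_subcover isCompact_univ V hVo
      (fun x _ => Set.mem_iUnion.2 ⟨x, hxV x⟩)
  have hcov : ∀ y : X, ∃ x, x ∈ t ∧ y ∈ V x := by
    intro y
    obtain ⟨x, hx, hyx⟩ := Set.mem_iUnion₂.1 (ht (Set.mem_univ y))
    exact ⟨x, hx, hyx⟩
  choose c hct hcV using hcov
  set F₀ : Set X := ⋃ x ∈ t, frontier (V x) with hF₀def
  have hF₀ : F₀.Finite := t.finite_toSet.biUnion fun x _ => hVfr x
  set m₀ : ℕ := F₀.ncard with hm₀
  set M : ℕ := m₀ + 1 with hM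
  have hfrV : ∀ x ∈ t, frontier (V x) ⊆ F₀ := fun x hx z hz =>
    Set.mem_biUnion hx hz
  -- cardinality of the union of translated frontiers
  have hFncard : ∀ n : ℕ, (⋃ i ∈ Finset.range n, s (i + 1) • F₀).ncard ≤ n * m₀ := by
    intro n
    induction n with
    | zero => simp
    | succ k ih =>
        have h1 : (⋃ i ∈ Finset.range (k+1), s (i + 1) • F₀).ncard
            ≤ (s (k + 1) • F₀).ncard + (⋃ i ∈ Finset.range k, s (i + 1) • F₀).ncard := by
          rw [Finset.range_add_one, Finset.set_biUnion_insert]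
          exact Set.ncard_union_le _ _
        have h2 : (s (k + 1) • F₀).ncard = m₀ := Set.ncard_smul_set _ _
        have h3 : (k+1) * m₀ = m₀ + k * m₀ := by ring
        omega
  -- frontier of a translate
  have hfr_smul : ∀ (g : G) (S : Set X), frontier (g • S) = g • frontier S := by
    intro g S
    rw [frontier, frontier, closure_smul, interior_smul, Set.smul_set_sdiff]
  -- key combinatorial bound
  have key : ∀ n : ℕ, 1 ≤ n → N n ≤ M * n + 1 := by
    intro n hn
    set Fn : Set X := ⋃ i ∈ Finset.range n, s (i + 1) • F₀ with hFndef
    have hFnfin : Fn.Finite :=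
      (Finset.range n).finite_toSet.biUnion fun i _ => hF₀.smul_set
    -- the product cover members through each point
    set w : X → Fin n → X := fun p i => c ((s (i.1 + 1))⁻¹ • p) with hwdef
    set W : X → Set X := fun p => ⋂ i : Fin n, s (i.1 + 1) • V (w p i) with hWdef
    set B : X → Set X := fun p => ⋂ i : Fin n, s (i.1 + 1) • A (w p i) with hBdef
    have hmemW : ∀ p : X, p ∈ W p := by
      intro p
      refine Set.mem_iInter.2 fun i => ?_
      rw [Set.mem_smul_set_iff_inv_smul_mem]
      exact (hcV _)
    have hWB : ∀ p, W p ⊆ B p := fun p =>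
      Set.iInter_mono fun i => Set.smul_set_mono (hVA _)
    have hWopen : ∀ p, IsOpen (W p) :=
      fun p => isOpen_iInter_of_finite fun i => (hVo _).smul _
    have hfrW : ∀ (p : X) (i : Fin n), frontier (s (i.1 + 1) • V (w p i)) ⊆ Fn := by
      intro p i
      rw [hfr_smul]
      refine subset_trans (Set.smul_set_mono (hfrV _ (hct _))) ?_
      exact fun z hz => Set.mem_biUnion (Finset.mem_range.2 i.2) hz
    have hclW : ∀ p, closure (W p) ⊆ W p ∪ Fn := by
      intro p z hz
      by_cases hzF : z ∈ Fn
      · exact Or.inr hzF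
      refine Or.inl (Set.mem_iInter.2 fun i => ?_)
      have h1 : z ∈ closure (s (i.1 + 1) • V (w p i)) :=
        closure_mono (Set.iInter_subset _ i) hz
      have h2 : z ∉ frontier (s (i.1 + 1) • V (w p i)) := fun hzf => hzF (hfrW p i hzf)
      have h3 : z ∈ interior (s (i.1 + 1) • V (w p i)) := by
        by_contra hni
        exact h2 ⟨h1, hni⟩
      exact interior_subset h3
    -- the clopen union
    set Gs : Set X := W x₀ ∪ ⋃ p ∈ Fn, W p with hGdef
    have hFnG : Fn ⊆ Gs := fun p hp => Or.inr (Set.mem_biUnion hp (hmemW p))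
    have hGopen : IsOpen Gs := (hWopen x₀).union (isOpen_biUnion fun p _ => hWopen p)
    have hGclosed : IsClosed Gs := by
      rw [← closure_subset_iff_isClosed]
      have hc1 : closure (⋃ p ∈ Fn, W p) ⊆ ⋃ p ∈ Fn, closure (W p) :=
        closure_minimal (Set.iUnion₂_mono fun p _ => subset_closure)
          (hFnfin.isClosed_biUnion fun _ _ => isClosed_closure)
      intro z hz
      rw [closure_union] at hz
      rcases hz with hz | hz
      · rcases hclW x₀ hz with h | h
        · exact Or.inl h
        · exact hFnG h
      · obtain ⟨p, hp, hzp⟩ := Set.mem_iUnion₂.1 (hc1 hz)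
        rcases hclW p hzp with h | h
        · exact Or.inr (Set.mem_biUnion hp h)
        · exact hFnG h
    have hGuniv : Gs = Set.univ := by
      rcases isClopen_iff.1 ⟨hGclosed, hGopen⟩ with h | h
      · have hx0 : x₀ ∈ Gs := Or.inl (hmemW x₀); rw [h] at hx0; exact absurd hx0 (Set.notMem_empty x₀)
      · exact h
    -- the subcover
    set 𝓑 : Set (Set X) := insert (B x₀) (B '' Fn) with h𝓑def
    have h𝓑fin : 𝓑.Finite := (hFnfin.image B).insert _
    have hform : ∀ Bb ∈ 𝓑, ∃ f : Fin n → Set X,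
        (∀ i, f i ∈ 𝒜) ∧ Bb = ⋂ i, s (i.1 + 1) • f i := by
      intro Bb hBb
      rcases Set.mem_insert_iff.1 hBb with rfl | hBb
      · exact ⟨fun i => A (w x₀ i), fun i => hA𝒜 _, rfl⟩
      · obtain ⟨p, hp, rfl⟩ := hBb
        exact ⟨fun i => A (w p i), fun i => hA𝒜 _, rfl⟩
    have hcover : ⋃₀ 𝓑 = Set.univ := by
      apply Set.eq_univ_of_univ_subset
      rw [← hGuniv]
      intro z hz
      rcases hz with hz | hz
      · exact ⟨B x₀, Set.mem_insert _ _, hWB x₀ hz⟩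
      · obtain ⟨p, hp, hzp⟩ := Set.mem_iUnion₂.1 hz
        exact ⟨B p, Set.mem_insert_of_mem _ ⟨p, hp, rfl⟩, hWB p hzp⟩
    have hcard : 𝓑.ncard ≤ M * n + 1 := by
      have h1 : 𝓑.ncard ≤ (B '' Fn).ncard + 1 := Set.ncard_insert_le _ _
      have h2 : (B '' Fn).ncard ≤ Fn.ncard := Set.ncard_image_le hFnfin
      have h3 : Fn.ncard ≤ n * m₀ := hFncard n
      have h4 : n * m₀ ≤ M * n := by
        calc n * m₀ ≤ n * M := Nat.mul_le_mul_left _ (by omega)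
          _ = M * n := Nat.mul_comm _ _
      omega
    have hmem : 𝓑.ncard ∈ {k : ℕ | ∃ 𝓑 : Set (Set X),
        (∀ B ∈ 𝓑, ∃ f : Fin n → Set X, (∀ i, f i ∈ 𝒜) ∧ B = ⋂ i, s (i.1 + 1) • f i) ∧
        ⋃₀ 𝓑 = Set.univ ∧ 𝓑.Finite ∧ 𝓑.ncard = k} := ⟨𝓑, hform, hcover, h𝓑fin, rfl⟩
    exact le_trans ((hN n hn).2 hmem) hcard
  -- N n ≥ 1
  have hN1 : ∀ n : ℕ, 1 ≤ n → 1 ≤ N n := by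
    intro n hn
    by_contra h
    push_neg at h
    have hN0 : N n = 0 := by omega
    obtain ⟨𝓑₀, -, hcov0, hfin0, hcard0⟩ := (hN n hn).1
    have h𝓑0 : 𝓑₀ = ∅ := (Set.ncard_eq_zero hfin0).1 (by omega)
    rw [h𝓑0, Set.sUnion_empty] at hcov0
    exact (Set.univ_nonempty (α := X)).ne_empty hcov0.symm
  -- the analytic limit
  have hMpos : (0:ℝ) < (M:ℝ) := by positivity
  have haff : Tendsto (fun x : ℝ => (M:ℝ) * x + 1) atTop atTop :=
    tendsto_atTop_add_const_right atTop 1 (Tendsto.const_mul_atTop hMpos tendsto_id)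
  have hlo : (fun x : ℝ => Real.log ((M:ℝ) * x + 1)) =o[atTop] fun x : ℝ => (M:ℝ) * x + 1 := by
    have := Real.isLittleO_log_id_atTop.comp_tendsto haff
    exact this
  have hbigO : (fun x : ℝ => (M:ℝ) * x + 1) =O[atTop] fun x : ℝ => x := by
    apply Asymptotics.IsBigO.of_bound ((M:ℝ) + 1)
    filter_upwards [eventually_ge_atTop (1:ℝ)] with x hx
    rw [Real.norm_eq_abs, Real.norm_eq_abs, abs_of_nonneg (by nlinarith), abs_of_nonneg (by linarith)]
    nlinarith
  have hupperR : Tendsto (fun x : ℝ => Real.log ((M:ℝ) * x + 1) / x) atTop (𝓝 0) :=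
    (hlo.trans_isBigO hbigO).tendsto_div_nhds_zero
  have hupper : Tendsto (fun n : ℕ => Real.log ((M:ℝ) * (n:ℝ) + 1) / (n:ℝ)) atTop (𝓝 0) :=
    hupperR.comp tendsto_natCast_atTop_atTop
  refine tendsto_of_tendsto_of_tendsto_of_le_of_le' tendsto_const_nhds hupper ?_ ?_
  · filter_upwards [eventually_ge_atTop 1] with n hn
    have h1 : (1:ℝ) ≤ (N n : ℝ) := by exact_mod_cast hN1 n hn
    have : 0 ≤ Real.log (N n) := Real.log_nonneg h1
    positivity
  · filter_upwards [eventually_ge_atTop 1] with n hn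
    have h1 : (1:ℝ) ≤ (N n : ℝ) := by exact_mod_cast hN1 n hn
    have h2 : (N n : ℝ) ≤ (M:ℝ) * (n:ℝ) + 1 := by
      have := key n hn
      push_cast
      exact_mod_cast this
    have hlog : Real.log (N n) ≤ Real.log ((M:ℝ) * (n:ℝ) + 1) :=
      Real.log_le_log (by linarith) h2
    have hnn : (0:ℝ) ≤ (n:ℝ) := by positivity
    exact div_le_div_of_nonneg_right hlog hnn |>.trans_eq rfl
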